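/- Let v : 2^N → ℝ≥0 with |N| = n and v(∅)=0. Sample a set S as follows: first pick k ∈ {1,…,n} with probability 1/(k·H_n) where H_n = Σ_{j=1}^n 1/j, then pick S uniformly at random among subsets of size k. Then E[ Σ_{i∈S} (v(S) - v(S\{i})) ] = v(N)/H_n. -/

import Mathlib

open Finset

-- counting lemma
lemma aux_erase (n k : ℕ) (hk : 1 ≤ k) (f : Finset (Fin n) → ℝ) :
    ∑ S ∈ (univ : Finset (Fin n)).powerset.filter (fun S => S.card = k),
      ∑ i ∈ S, f (S.erase i)
    = ∑ T ∈ (univ : Finset (Fin n)).powerset.filter (fun T => T.card = k - 1),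
        ((n + 1 - k : ℕ) : ℝ) * f T := by
  have h1 : ∑ T ∈ (univ : Finset (Fin n)).powerset.filter (fun T => T.card = k - 1),
        ((n + 1 - k : ℕ) : ℝ) * f T
      = ∑ T ∈ (univ : Finset (Fin n)).powerset.filter (fun T => T.card = k - 1),
        ∑ i ∈ Tᶜ, f T := by
    refine Finset.sum_congr rfl fun T hT => ?_
    simp only [mem_filter] at hT
    have hc : Tᶜ.card = n + 1 - k := by
      rw [Finset.card_compl, hT.2, Fintype.card_fin]; omega
    rw [Finset.sum_const, hc, nsmul_eq_mul]
  rw [h1, Finset.sum_sigma', Finset.sum_sigma']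
  refine Finset.sum_nbij' (fun x => ⟨x.1.erase x.2, x.2⟩) (fun y => ⟨insert y.2 y.1, y.2⟩)
    ?_ ?_ ?_ ?_ ?_
  · rintro ⟨S, i⟩ h
    simp only [Finset.mem_sigma, mem_filter, mem_powerset, mem_compl] at h ⊢
    refine ⟨⟨fun x _ => Finset.mem_univ x, ?_⟩, Finset.notMem_erase _ _⟩
    rw [Finset.card_erase_of_mem h.2, h.1.2]
  · rintro ⟨T, i⟩ h
    simp only [Finset.mem_sigma, mem_filter, mem_powerset, mem_compl] at h ⊢
    refine ⟨⟨fun x _ => Finset.mem_univ x, ?_⟩, Finset.mem_insert_self _ _⟩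
    rw [Finset.card_insert_of_notMem h.2, h.1.2]
    omega
  · rintro ⟨S, i⟩ h
    simp only [Finset.mem_sigma, mem_filter, mem_powerset] at h
    simp [Finset.insert_erase h.2]
  · rintro ⟨T, i⟩ h
    simp only [Finset.mem_sigma, mem_filter, mem_powerset, mem_compl] at h
    simp [Finset.erase_insert h.2]
  · rintro ⟨S, i⟩ h
    rfl

theorem stmt17 {n : ℕ} (hn : 1 ≤ n) (v : Finset (Fin n) → ℝ) (hv0 : v ∅ = 0) :
    ∑ k ∈ Finset.Icc 1 n,
      (1 / ((k : ℝ) * ∑ j ∈ Finset.Icc 1 n, (1 : ℝ) / j)) *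
        ((∑ S ∈ (Finset.univ : Finset (Fin n)).powerset.filter
            (fun S => S.card = k),
          ∑ i ∈ S, (v S - v (S.erase i))) / (n.choose k : ℝ)) =
      v Finset.univ / (∑ j ∈ Finset.Icc 1 n, (1 : ℝ) / j) := by
  set H : ℝ := ∑ j ∈ Finset.Icc 1 n, (1 : ℝ) / j with hH
  have hHpos : 0 < H := by
    apply Finset.sum_pos
    · intro j hj
      simp only [Finset.mem_Icc] at hj
      have : 0 < j := hj.1
      positivity
    · exact ⟨1, by simp [Finset.mem_Icc, hn]⟩
  set A : ℕ → ℝ := fun k => ∑ S ∈ (univ : Finset (Fin n)).powerset.filter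
      (fun S => S.card = k), v S with hA
  set g : ℕ → ℝ := fun k => A k / (n.choose k : ℝ) with hg
  -- each term equals (1/H) * (g k - g (k-1))
  have key : ∀ k ∈ Finset.Icc 1 n,
      (1 / ((k : ℝ) * H)) *
        ((∑ S ∈ (univ : Finset (Fin n)).powerset.filter (fun S => S.card = k),
          ∑ i ∈ S, (v S - v (S.erase i))) / (n.choose k : ℝ))
      = (1 / H) * (g k - g (k - 1)) := by
    intro k hk
    simp only [Finset.mem_Icc] at hk
    obtain ⟨hk1, hkn⟩ := hk
    have hsplit : ∑ S ∈ (univ : Finset (Fin n)).powerset.filter (fun S => S.card = k),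
        ∑ i ∈ S, (v S - v (S.erase i))
        = (k : ℝ) * A k - ((n + 1 - k : ℕ) : ℝ) * A (k - 1) := by
      have e1 : ∀ S ∈ (univ : Finset (Fin n)).powerset.filter (fun S => S.card = k),
          ∑ i ∈ S, (v S - v (S.erase i)) = (k : ℝ) * v S - ∑ i ∈ S, v (S.erase i) := by
        intro S hS
        simp only [mem_filter] at hS
        rw [Finset.sum_sub_distrib, Finset.sum_const, hS.2, nsmul_eq_mul]
      rw [Finset.sum_congr rfl e1, Finset.sum_sub_distrib, aux_erase n k hk1,
        ← Finset.mul_sum, ← Finset.mul_sum]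
    rw [hsplit]
    -- arithmetic: (1/(k*H)) * ((k*A k - (n+1-k)*A(k-1))/C) = (1/H)*(A k/C - A(k-1)/C')
    have hC : (0 : ℝ) < (n.choose k : ℝ) := by
      exact_mod_cast Nat.choose_pos hkn
    have hC' : (0 : ℝ) < (n.choose (k - 1) : ℝ) := by
      exact_mod_cast Nat.choose_pos (by omega)
    have hkR : (0 : ℝ) < (k : ℝ) := by exact_mod_cast hk1
    -- k * C(n,k) = (n+1-k) * C(n,k-1)
    have hid : (k : ℝ) * (n.choose k : ℝ) = ((n + 1 - k : ℕ) : ℝ) * (n.choose (k - 1) : ℝ) := by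
      have := Nat.choose_succ_right_eq n (k - 1)
      have hk' : k - 1 + 1 = k := by omega
      rw [hk'] at this
      have h2 : n - (k - 1) = n + 1 - k := by omega
      rw [h2] at this
      exact_mod_cast (by rw [mul_comm, this, mul_comm] : k * n.choose k = (n+1-k) * n.choose (k-1))
    have hm : ((n + 1 - k : ℕ) : ℝ) = (k : ℝ) * (n.choose k : ℝ) / (n.choose (k - 1) : ℝ) := by
      rw [eq_div_iff hC'.ne']
      linarith [hid]
    simp only [hg]
    rw [hm]
    field_simp
  rw [Finset.sum_congr rfl key]
  -- telescoping
  have htel : ∑ k ∈ Finset.Icc 1 n, (1 / H) * (g k - g (k - 1)) = (1 / H) * (g n - g 0) := by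
    rw [← Finset.mul_sum]
    congr 1
    rw [← Finset.Ico_add_one_right_eq_Icc, Finset.sum_Ico_eq_sum_range]
    have : ∀ i, g (1 + i) - g (1 + i - 1) = g (i + 1) - g i := by
      intro i; congr 2 <;> omega
    simp only [this]
    simpa using Finset.sum_range_sub g n
  rw [htel]
  have hAn : A n = v Finset.univ := by
    simp only [hA, ← Finset.powersetCard_eq_filter]
    have h := Finset.powersetCard_self (univ : Finset (Fin n))
    rw [Finset.card_univ, Fintype.card_fin] at h
    rw [h, Finset.sum_singleton]
  have hA0 : A 0 = 0 := by
    simp only [hA, ← Finset.powersetCard_eq_filter]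
    rw [Finset.powersetCard_zero, Finset.sum_singleton, hv0]
  simp [hg, hAn, hA0, div_eq_mul_inv, mul_comm]
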